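/- Let n be a positive integer with p ∤ n and let α = α_0 + uα_1 + ⋯ + u^{t−1}α_{t−1} ∈ R^t be such that x^n − α_{0,0} is irreducible over F, where α_{0,0} is the unique element of F with α_{0,0}^{p^s} = α_0. Then the image of every nonzero polynomial g ∈ F[x] of degree less than n is invertible in the quotient ring R^t[x]/⟨x^{np^s} − α⟩. -/

import Mathlib

open Polynomial

/-- The finite chain ring `R^t = 𝔽_{p^m}[u]/⟨u^t⟩`. -/
abbrev Rt (p m t : ℕ) [Fact p.Prime] : Type _ :=
  Polynomial (GaloisField p m) ⧸ Ideal.span {(X : Polynomial (GaloisField p m)) ^ t}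

noncomputable instance (p m t : ℕ) [Fact p.Prime] : CommRing (Rt p m t) :=
  Ideal.Quotient.commRing _

/-- The canonical projection `𝔽_{p^m}[u] → R^t`. -/
noncomputable def mkRt (p m t : ℕ) [Fact p.Prime] :
    Polynomial (GaloisField p m) →+* Rt p m t :=
  Ideal.Quotient.mk _

/-- The canonical embedding `𝔽_{p^m} → R^t`. -/
noncomputable def κ (p m t : ℕ) [Fact p.Prime] : GaloisField p m →+* Rt p m t :=
  (mkRt p m t).comp (C : GaloisField p m →+* Polynomial (GaloisField p m))

/-- Let `n` be a positive integer with `p ∤ n` and let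
`α = α₀ + uα₁ + ⋯ + u^{t-1}α_{t-1} ∈ R^t` be such that `xⁿ − α_{0,0}` is irreducible over
`𝔽_{p^m}`, where `α_{0,0}^{p^s} = α₀`.  Then the image of every nonzero polynomial
`g ∈ 𝔽_{p^m}[x]` of degree less than `n` is invertible in `R^t[x]/⟨x^{np^s} − α⟩`. -/
theorem stmt_3 (p m s t n : ℕ) [Fact p.Prime] (hm : m ≠ 0) (ht : 1 ≤ t)
    (hn : 0 < n) (hnp : ¬ p ∣ n)
    (αc : ℕ → GaloisField p m) (α00 : GaloisField p m) (hα00 : α00 ^ p ^ s = αc 0)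
    (hirr : Irreducible ((X : Polynomial (GaloisField p m)) ^ n - C α00)) :
    ∀ g : Polynomial (GaloisField p m), g ≠ 0 → g.degree < (n : ℕ) →
      IsUnit (Ideal.Quotient.mk
        (Ideal.span {((X : Polynomial (Rt p m t)) ^ (n * p ^ s) -
          C (mkRt p m t (∑ i ∈ Finset.range t, C (αc i) * X ^ i)))})
        (g.map (κ p m t))) := by
  classical
  intro g hg hdeg
  -- the evaluation map ε : Rt → F, u ↦ 0
  have hev : ∀ q ∈ Ideal.span {(X : Polynomial (GaloisField p m)) ^ t},
      (Polynomial.evalRingHom (0 : GaloisField p m)) q = 0 := by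
    intro q hq
    rw [Ideal.mem_span_singleton] at hq
    obtain ⟨r, rfl⟩ := hq
    simp [zero_pow (by omega : t ≠ 0)]
  set ε : Rt p m t →+* GaloisField p m := Ideal.Quotient.lift _ (Polynomial.evalRingHom 0) hev with hεdef
  have hεmk : ∀ q : Polynomial (GaloisField p m), ε (mkRt p m t q) = q.eval 0 := by
    intro q; simp [hεdef, mkRt]
  have hεκ : ∀ a : GaloisField p m, ε (κ p m t a) = a := by
    intro a; simp [κ, hεmk]
  have hmapκ : ∀ h : Polynomial (GaloisField p m), (h.map (κ p m t)).map ε = h := by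
    intro h
    rw [Polynomial.map_map]
    have : ε.comp (κ p m t) = RingHom.id (GaloisField p m) := by ext a; simp [hεκ]
    rw [this, Polynomial.map_id]
  -- modulus polynomials
  set f : Polynomial (Rt p m t) :=
    (X : Polynomial (Rt p m t)) ^ (n * p ^ s) -
      C (mkRt p m t (∑ i ∈ Finset.range t, C (αc i) * X ^ i)) with hfdef
  set fB : Polynomial (GaloisField p m) := (X : Polynomial (GaloisField p m)) ^ (n * p ^ s) - C (αc 0) with hfBdef
  have hfε : f.map ε = fB := by
    rw [hfdef, hfBdef]
    rw [Polynomial.map_sub, Polynomial.map_pow, Polynomial.map_X, Polynomial.map_C]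
    congr 2
    rw [hεmk, Polynomial.eval_finset_sum]
    rw [Finset.sum_eq_single 0]
    · simp
    · intro i _ hi; simp [zero_pow hi]
    · intro h; exact absurd (Finset.mem_range.mpr (by omega)) h
  -- fB is the p^s-th power of the irreducible polynomial
  have hfB : fB = ((X : Polynomial (GaloisField p m)) ^ n - C α00) ^ p ^ s := by
    rw [sub_pow_char_pow (p := p), ← pow_mul, ← map_pow, hα00, hfBdef]
  -- coprimality of g with fB
  have hndvd : ¬ ((X : Polynomial (GaloisField p m)) ^ n - C α00) ∣ g := by
    intro hd
    exact hg (Polynomial.eq_zero_of_dvd_of_degree_lt hd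
      (by rwa [Polynomial.degree_X_pow_sub_C hn]))
  have hcop : IsCoprime g fB := by
    rw [hfB]
    exact ((hirr.coprime_iff_not_dvd.mpr hndvd).symm).pow_right
  obtain ⟨a, b, hab⟩ := hcop
  -- the candidate product
  have hf0 : Ideal.Quotient.mk (Ideal.span {f}) f = 0 :=
    Ideal.Quotient.eq_zero_iff_mem.mpr (Ideal.subset_span rfl)
  set P : Polynomial (Rt p m t) := (g.map (κ p m t)) * (a.map (κ p m t)) - 1 with hPdef
  have hPε : P.map ε = fB * (-b) := by
    rw [hPdef, Polynomial.map_sub, Polynomial.map_mul, Polynomial.map_one, hmapκ, hmapκ]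
    have : a * g + b * fB = 1 := hab
    ring_nf
    ring_nf at this
    linear_combination this
  set P' : Polynomial (Rt p m t) := P - f * ((-b).map (κ p m t)) with hP'def
  have hP'ε : P'.map ε = 0 := by
    rw [hP'def, Polynomial.map_sub, Polynomial.map_mul, hfε, hmapκ, hPε, sub_self]
  -- kernel of ε
  have hker : RingHom.ker ε ≤ Ideal.span {mkRt p m t X} := by
    intro x hx
    obtain ⟨q, rfl⟩ := Ideal.Quotient.mk_surjective x
    have hq : q.eval 0 = 0 := by
      have := RingHom.mem_ker.mp hx
      rwa [show (Ideal.Quotient.mk _ q : Rt p m t) = mkRt p m t q from rfl, hεmk] at this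
    have hx0 : q.coeff 0 = 0 := by rwa [Polynomial.coeff_zero_eq_eval_zero]
    obtain ⟨r, hr⟩ := Polynomial.X_dvd_iff.mpr hx0
    rw [Ideal.mem_span_singleton]
    exact ⟨mkRt p m t r, by rw [show (Ideal.Quotient.mk _ q : Rt p m t) = mkRt p m t q from rfl, ← map_mul, ← hr]⟩
  -- P' is divisible by C u
  have hP'mem : P' ∈ Ideal.span {C (mkRt p m t X)} := by
    have h1 : P' ∈ RingHom.ker (Polynomial.mapRingHom ε) := by
      rw [RingHom.mem_ker]; exact hP'ε
    rw [Polynomial.ker_mapRingHom] at h1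
    have h2 : (RingHom.ker ε).map (C : Rt p m t →+* Polynomial (Rt p m t)) ≤
        (Ideal.span {mkRt p m t X}).map C := Ideal.map_mono hker
    have h3 := h2 h1
    rwa [Ideal.map_span, Set.image_singleton] at h3
  obtain ⟨W, hW⟩ := Ideal.mem_span_singleton.mp hP'mem
  -- u^t = 0
  have hut : (mkRt p m t X) ^ t = 0 := by
    rw [show (mkRt p m t X) ^ t = mkRt p m t (X ^ t) from (map_pow _ _ _).symm]
    exact Ideal.Quotient.eq_zero_iff_mem.mpr (Ideal.subset_span rfl)
  have hP't : P' ^ t = 0 := by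
    rw [hW, mul_pow, ← map_pow, hut, map_zero, zero_mul]
  -- mkA P is nilpotent
  have hsub : P - P' ∈ Ideal.span {f} := by
    rw [hP'def, sub_sub_cancel]
    exact Ideal.mem_span_singleton.mpr ⟨_, rfl⟩
  have hmkPP' : Ideal.Quotient.mk (Ideal.span {f}) P = Ideal.Quotient.mk (Ideal.span {f}) P' :=
    Ideal.Quotient.eq.mpr hsub
  have hnil : IsNilpotent (Ideal.Quotient.mk (Ideal.span {f}) P) := by
    refine ⟨t, ?_⟩
    rw [hmkPP', ← map_pow, hP't, map_zero]
  have hunit : IsUnit (Ideal.Quotient.mk (Ideal.span {f}) P + 1) := hnil.isUnit_add_one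
  have heq : Ideal.Quotient.mk (Ideal.span {f}) P + 1 =
      Ideal.Quotient.mk (Ideal.span {f}) (g.map (κ p m t)) *
        Ideal.Quotient.mk (Ideal.span {f}) (a.map (κ p m t)) := by
    rw [hPdef, map_sub, map_mul, map_one, sub_add_cancel]
  rw [heq] at hunit
  obtain ⟨u, hu⟩ := hunit
  letI := Ideal.Quotient.commRing (Ideal.span {f})
  refine ⟨⟨_, Ideal.Quotient.mk (Ideal.span {f}) (a.map (κ p m t)) * ↑u⁻¹, ?_, ?_⟩, rfl⟩
  · rw [← mul_assoc, ← hu, Units.mul_inv]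
  · rw [mul_right_comm, mul_comm (Ideal.Quotient.mk (Ideal.span {f}) (a.map (κ p m t))), ← hu, Units.mul_inv]
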